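/- (Collision vs. information spectrum relative entropy) For every 0 < ε, λ < 1, density matrix ρ, and positive semidefinite σ with supp ρ ⊆ supp(λρ + (1−λ)σ): exp D₂(ρ ‖ λρ + (1−λ)σ) ≥ (1−ε)·[λ + (1−λ)·exp(−D_s^ε(ρ‖σ))]^{−1}, where D₂(ρ‖τ) = log tr(τ^{−1/2}ρτ^{−1/2}ρ) and D_s^ε(ρ‖σ) = sup{γ ∈ ℝ : tr(ρ {ρ ≤ 2^γ σ}) ≤ ε}. -/

import Mathlib

open Matrix Kronecker ComplexOrder

/-- Apply a real function to a Hermitian matrix via its spectral decomposition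
(returns 0 on non-Hermitian input). -/
noncomputable def hermFun {n : Type*} [Fintype n] [DecidableEq n]
    (f : ℝ → ℝ) (A : Matrix n n ℂ) : Matrix n n ℂ :=
  if hA : A.IsHermitian then
    (hA.eigenvectorUnitary : Matrix n n ℂ) *
      Matrix.diagonal (fun i => (f (hA.eigenvalues i) : ℂ)) *
      (hA.eigenvectorUnitary : Matrix n n ℂ)ᴴ
  else 0

/-- Inverse square root of a positive semidefinite matrix, taken on its support. -/
noncomputable def pinvSqrt {n : Type*} [Fintype n] [DecidableEq n]
    (A : Matrix n n ℂ) : Matrix n n ℂ :=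
  hermFun (fun x => if x ≤ 0 then 0 else (Real.sqrt x)⁻¹) A

/-- For Hermitian `M`, the orthogonal projection `{0 ≤ M}` onto the span of eigenvectors
of `M` with nonnegative eigenvalues. -/
noncomputable def posProj {n : Type*} [Fintype n] [DecidableEq n]
    (M : Matrix n n ℂ) : Matrix n n ℂ :=
  hermFun (fun x => if 0 ≤ x then 1 else 0) M

/-- Information spectrum relative entropy
`D_s^ε(ρ‖σ) = sup{γ : tr(ρ {ρ ≤ 2^γ σ}) ≤ ε}`. -/
noncomputable def Ds {n : Type*} [Fintype n] [DecidableEq n]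
    (ε : ℝ) (ρ σ : Matrix n n ℂ) : ℝ :=
  sSup {γ : ℝ | ((ρ * posProj (((2 : ℝ) ^ γ) • σ - ρ)).trace).re ≤ ε}

section API

set_option linter.unusedSectionVars false

variable {n : Type*} [Fintype n] [DecidableEq n] {A B X Y M : Matrix n n ℂ} {f g : ℝ → ℝ}

lemma hermFun_def (hA : A.IsHermitian) (f : ℝ → ℝ) :
    hermFun f A = (hA.eigenvectorUnitary : Matrix n n ℂ) *
      Matrix.diagonal (fun i => (f (hA.eigenvalues i) : ℂ)) *
      (hA.eigenvectorUnitary : Matrix n n ℂ)ᴴ := dif_pos hA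

lemma hermFun_isHermitian (hA : A.IsHermitian) : (hermFun f A).IsHermitian := by
  rw [hermFun_def hA, Matrix.IsHermitian]
  have hd : (star fun i => (f (hA.eigenvalues i) : ℂ)) = fun i => (f (hA.eigenvalues i) : ℂ) := by
    funext i; simp [Complex.conj_ofReal]
  simp only [conjTranspose_mul, conjTranspose_conjTranspose, diagonal_conjTranspose, hd,
    Matrix.mul_assoc]

lemma hermFun_mul (hA : A.IsHermitian) :
    hermFun f A * hermFun g A = hermFun (fun x => f x * g x) A := by
  rw [hermFun_def hA, hermFun_def hA, hermFun_def hA]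
  have h1 : (hA.eigenvectorUnitary : Matrix n n ℂ)ᴴ * (hA.eigenvectorUnitary : Matrix n n ℂ) = 1 := by
    simpa [star] using (Matrix.mem_unitaryGroup_iff'.mp hA.eigenvectorUnitary.2)
  have : (hA.eigenvectorUnitary : Matrix n n ℂ) *
      Matrix.diagonal (fun i => (f (hA.eigenvalues i) : ℂ)) *
      (hA.eigenvectorUnitary : Matrix n n ℂ)ᴴ *
      ((hA.eigenvectorUnitary : Matrix n n ℂ) *
      Matrix.diagonal (fun i => (g (hA.eigenvalues i) : ℂ)) *
      (hA.eigenvectorUnitary : Matrix n n ℂ)ᴴ) =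
      (hA.eigenvectorUnitary : Matrix n n ℂ) *
      (Matrix.diagonal (fun i => (f (hA.eigenvalues i) : ℂ)) *
      ((hA.eigenvectorUnitary : Matrix n n ℂ)ᴴ * (hA.eigenvectorUnitary : Matrix n n ℂ)) *
      Matrix.diagonal (fun i => (g (hA.eigenvalues i) : ℂ))) *
      (hA.eigenvectorUnitary : Matrix n n ℂ)ᴴ := by
    simp only [Matrix.mul_assoc]
  rw [this, h1]
  simp [diagonal_mul_diagonal, Complex.ofReal_mul]

lemma hermFun_congr (hA : A.IsHermitian) (h : ∀ i, f (hA.eigenvalues i) = g (hA.eigenvalues i)) :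
    hermFun f A = hermFun g A := by
  rw [hermFun_def hA, hermFun_def hA]
  have : (fun i => (f (hA.eigenvalues i) : ℂ)) = fun i => (g (hA.eigenvalues i) : ℂ) :=
    funext fun i => by rw [h i]
  rw [this]

lemma hermFun_id (hA : A.IsHermitian) : hermFun id A = A := by
  rw [hermFun_def hA]
  exact (hA.spectral_theorem).symm

lemma hermFun_one (hA : A.IsHermitian) : hermFun (fun _ => 1) A = 1 := by
  rw [hermFun_def hA]
  simp only [Complex.ofReal_one, diagonal_one, mul_one]
  simpa [star] using (Matrix.mem_unitaryGroup_iff.mp hA.eigenvectorUnitary.2)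

lemma hermFun_add (hA : A.IsHermitian) :
    hermFun f A + hermFun g A = hermFun (fun x => f x + g x) A := by
  rw [hermFun_def hA, hermFun_def hA, hermFun_def hA]
  have hd : (Matrix.diagonal (fun i => (f (hA.eigenvalues i) : ℂ))) +
      (Matrix.diagonal (fun i => (g (hA.eigenvalues i) : ℂ))) =
      Matrix.diagonal (fun i => ((f (hA.eigenvalues i) + g (hA.eigenvalues i) : ℝ) : ℂ)) := by
    rw [Matrix.diagonal_add]
    congr 1
    funext i
    push_cast
    ring
  rw [← hd, Matrix.mul_add, Matrix.add_mul]

lemma hermFun_posSemidef (hA : A.IsHermitian) (hf : ∀ i, 0 ≤ f (hA.eigenvalues i)) :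
    (hermFun f A).PosSemidef := by
  rw [hermFun_def hA]
  exact (Matrix.posSemidef_diagonal_iff.mpr fun i => by
    simpa using Complex.zero_le_real.mpr (hf i)).mul_mul_conjTranspose_same _

lemma hermFun_trace (hA : A.IsHermitian) :
    (hermFun f A).trace = ∑ i, (f (hA.eigenvalues i) : ℂ) := by
  rw [hermFun_def hA, Matrix.trace_mul_cycle]
  have h1 : (hA.eigenvectorUnitary : Matrix n n ℂ)ᴴ * (hA.eigenvectorUnitary : Matrix n n ℂ) = 1 := by
    simpa [star] using (Matrix.mem_unitaryGroup_iff'.mp hA.eigenvectorUnitary.2)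
  rw [h1, Matrix.one_mul, Matrix.trace_diagonal]

lemma psd_diag_re_nonneg (hA : A.PosSemidef) (i : n) : 0 ≤ (A i i).re := by
  have h := hA.dotProduct_mulVec_nonneg (Pi.single i 1)
  have h2 : star (Pi.single i (1:ℂ)) ⬝ᵥ A *ᵥ Pi.single i 1 = A i i := by
    simp [Matrix.mulVec_single, dotProduct, Pi.single_apply, Finset.sum_ite_eq]
  rw [h2] at h
  exact (Complex.le_def.mp h).1

lemma psd_trace_re_nonneg (hA : A.PosSemidef) : 0 ≤ (A.trace).re := by
  rw [Matrix.trace, Complex.re_sum]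
  exact Finset.sum_nonneg fun i _ => psd_diag_re_nonneg hA i

lemma trace_mul_re_nonneg (hA : A.PosSemidef) (hB : B.PosSemidef) :
    0 ≤ ((A * B).trace).re := by
  open scoped MatrixOrder in
  obtain ⟨C, rfl⟩ := CStarAlgebra.nonneg_iff_eq_star_mul_self.mp hB.nonneg
  rw [← Matrix.mul_assoc, Matrix.trace_mul_cycle]
  exact psd_trace_re_nonneg (hA.mul_mul_conjTranspose_same C)

lemma herm_entry (hY : Y.IsHermitian) (i j : n) : Y j i = starRingEnd ℂ (Y i j) := by
  have := congrFun (congrFun hY i) j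
  simp only [Matrix.conjTranspose_apply] at this
  rw [← this]; simp

lemma trace_mul_herm_eq (hY : Y.IsHermitian) :
    (X * Y).trace = ∑ p : n × n, X p.1 p.2 * starRingEnd ℂ (Y p.1 p.2) := by
  simp only [Matrix.trace, Matrix.diag_apply, Matrix.mul_apply]
  rw [Fintype.sum_prod_type]
  exact Finset.sum_congr rfl fun i _ => Finset.sum_congr rfl fun j _ => by
    rw [herm_entry hY i j]

lemma trace_CS (hX : X.IsHermitian) (hY : Y.IsHermitian) :
    (((X * Y).trace).re)^2 ≤ ((X * X).trace).re * ((Y * Y).trace).re := by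
  classical
  set v : EuclideanSpace ℂ (n × n) := (WithLp.equiv 2 _).symm (fun p => Y p.1 p.2) with hv
  set w : EuclideanSpace ℂ (n × n) := (WithLp.equiv 2 _).symm (fun p => X p.1 p.2) with hw
  have hinner : (X * Y).trace = starRingEnd ℂ (inner ℂ w v) := by
    rw [trace_mul_herm_eq hY, PiLp.inner_apply, map_sum]
    refine Finset.sum_congr rfl fun p _ => ?_
    simp only [hv, hw, RCLike.inner_apply, WithLp.equiv_symm_apply, PiLp.toLp_apply]
    rw [_root_.map_mul, Complex.conj_conj, mul_comm]
  have habs : ‖(X * Y).trace‖ ≤ ‖w‖ * ‖v‖ := by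
    rw [hinner, RCLike.norm_conj]
    exact norm_inner_le_norm w v
  have normsq : ∀ Z : Matrix n n ℂ, Z.IsHermitian →
      ((Z * Z).trace).re = ∑ p : n × n, ‖Z p.1 p.2‖^2 := by
    intro Z hZ
    rw [trace_mul_herm_eq hZ, Complex.re_sum]
    refine Finset.sum_congr rfl fun p _ => ?_
    rw [Complex.mul_conj]
    rw [Complex.ofReal_re, Complex.normSq_eq_norm_sq]
  have hXX : ((X * X).trace).re = ‖w‖^2 := by
    rw [normsq X hX, EuclideanSpace.norm_eq, Real.sq_sqrt]
    · refine Finset.sum_congr rfl fun p _ => ?_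
      simp [hw]
    · exact Finset.sum_nonneg fun p _ => sq_nonneg _
  have hYY : ((Y * Y).trace).re = ‖v‖^2 := by
    rw [normsq Y hY, EuclideanSpace.norm_eq, Real.sq_sqrt]
    · refine Finset.sum_congr rfl fun p _ => ?_
      simp [hv]
    · exact Finset.sum_nonneg fun p _ => sq_nonneg _
  calc (((X * Y).trace).re)^2 ≤ ‖(X * Y).trace‖^2 := by
        rw [← sq_abs]
        apply pow_le_pow_left₀ (abs_nonneg _)
        exact Complex.abs_re_le_norm _
    _ ≤ (‖w‖ * ‖v‖)^2 := pow_le_pow_left₀ (norm_nonneg _) habs 2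
    _ = ((X * X).trace).re * ((Y * Y).trace).re := by rw [mul_pow, hXX, hYY]

lemma herm_real_smul (hA : A.IsHermitian) (r : ℝ) : (r • A).IsHermitian := by
  unfold Matrix.IsHermitian
  rw [Matrix.conjTranspose_smul, hA.eq]
  norm_num

lemma psd_real_smul (hA : A.PosSemidef) {r : ℝ} (hr : 0 ≤ r) : (r • A).PosSemidef := by
  refine .of_dotProduct_mulVec_nonneg (herm_real_smul hA.1 r) fun x => ?_
  have h1 : (r • A) *ᵥ x = r • (A *ᵥ x) := by
    ext i
    simp only [Matrix.mulVec, dotProduct, Pi.smul_apply, Matrix.smul_apply, Finset.smul_sum,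
      Complex.real_smul]
    exact Finset.sum_congr rfl fun k _ => mul_assoc _ _ _
  rw [h1]
  have h2 : star x ⬝ᵥ (r • (A *ᵥ x)) = (r : ℂ) * (star x ⬝ᵥ (A *ᵥ x)) := by
    simp only [dotProduct, Pi.smul_apply, Complex.real_smul, Finset.mul_sum]
    exact Finset.sum_congr rfl fun k _ => by ring
  rw [h2]
  exact mul_nonneg (by exact_mod_cast Complex.zero_le_real.mpr hr) (hA.dotProduct_mulVec_nonneg x)

end API
section API2
set_option linter.unusedSectionVars false
open Matrix ComplexOrder
variable {n : Type*} [Fintype n] [DecidableEq n] {τ ρ M : Matrix n n ℂ}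

lemma mul_suppProj (hτ : τ.PosSemidef) (hρh : ρ.IsHermitian)
    (hsupp : ∀ x, τ *ᵥ x = 0 → ρ *ᵥ x = 0) :
    ρ * hermFun (fun x => if x ≤ 0 then 0 else 1) τ = ρ ∧
    hermFun (fun x => if x ≤ 0 then 0 else 1) τ * ρ = ρ := by
  have hτh := hτ.1
  set Pi := hermFun (fun x => if x ≤ 0 then 0 else 1) τ with hPidef
  have τPi : τ * Pi = τ := by
    conv_lhs => rw [← hermFun_id hτh]
    rw [hPidef, hermFun_mul hτh]
    have h2 : hermFun (fun x => id x * (if x ≤ 0 then 0 else 1)) τ = hermFun id τ :=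
      hermFun_congr hτh (fun i => by
        have := hτ.eigenvalues_nonneg i
        by_cases h : hτh.eigenvalues i ≤ 0
        · simp only [h, if_pos, id]
          have : hτh.eigenvalues i = 0 := le_antisymm h this
          simp [this]
        · simp [h, id])
    rw [h2, hermFun_id hτh]
  have hτ0 : τ * (1 - Pi) = 0 := by rw [Matrix.mul_sub, Matrix.mul_one, τPi, sub_self]
  have hρ0 : ρ * (1 - Pi) = 0 := by
    ext i j
    have hv : τ *ᵥ (fun k => (1 - Pi) k j) = 0 := by
      ext i'
      have := congrFun (congrFun hτ0 i') j
      simpa [Matrix.mul_apply, Matrix.mulVec, dotProduct] using this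
    have hv2 := hsupp _ hv
    have he : (ρ * (1 - Pi)) i j = (ρ *ᵥ (fun k => (1 - Pi) k j)) i := by
      simp [Matrix.mul_apply, Matrix.mulVec, dotProduct]
    rw [he, hv2]
    rfl
  have h1 : ρ * Pi = ρ := by
    rw [Matrix.mul_sub, Matrix.mul_one, sub_eq_zero] at hρ0
    exact hρ0.symm
  refine ⟨h1, ?_⟩
  have h2 := congrArg Matrix.conjTranspose h1
  rwa [Matrix.conjTranspose_mul, (hermFun_isHermitian hτh).eq, hρh.eq] at h2

lemma posProj_psd (hM : M.IsHermitian) : (posProj M).PosSemidef :=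
  hermFun_posSemidef hM (fun i => by by_cases h : 0 ≤ hM.eigenvalues i <;> simp [posProj, h])

lemma one_sub_posProj (hM : M.IsHermitian) :
    1 - posProj M = hermFun (fun x => if 0 ≤ x then 0 else 1) M := by
  have h : posProj M + hermFun (fun x => if 0 ≤ x then 0 else 1) M = 1 := by
    show hermFun _ M + hermFun _ M = 1
    rw [hermFun_add hM]
    have : hermFun (fun x => (if 0 ≤ x then (1:ℝ) else 0) + (if 0 ≤ x then 0 else 1)) M =
        hermFun (fun _ => 1) M :=
      hermFun_congr hM (fun i => by by_cases h : 0 ≤ hM.eigenvalues i <;> simp [h])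
    rw [this, hermFun_one hM]
  exact (eq_sub_of_add_eq' h).symm

lemma one_sub_posProj_psd (hM : M.IsHermitian) : (1 - posProj M).PosSemidef := by
  rw [one_sub_posProj hM]
  exact hermFun_posSemidef hM (fun i => by by_cases h : 0 ≤ hM.eigenvalues i <;> simp [h])

lemma trace_negpart_le (hM : M.IsHermitian) : ((M * (1 - posProj M)).trace).re ≤ 0 := by
  rw [one_sub_posProj hM]
  set f2 : ℝ → ℝ := fun x => if 0 ≤ x then 0 else 1 with hf2
  set P2 := hermFun f2 M with hP2def
  have hPP : P2 * P2 = P2 := by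
    rw [hP2def, hermFun_mul hM]
    exact hermFun_congr hM (fun i => by by_cases h : 0 ≤ hM.eigenvalues i <;> simp [hf2, h])
  have h3 : P2 * M * P2 = hermFun (fun x => f2 x * id x * f2 x) M := by
    conv_lhs => rw [← hermFun_id hM]
    rw [hP2def, hermFun_mul hM, hermFun_mul hM]
  have hc : (M * P2).trace = (hermFun (fun x => f2 x * id x * f2 x) M).trace := by
    calc (M * P2).trace = (M * P2 * P2).trace := by rw [Matrix.mul_assoc, hPP]
      _ = (P2 * (M * P2)).trace := Matrix.trace_mul_comm _ _
      _ = (P2 * M * P2).trace := by rw [Matrix.mul_assoc]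
      _ = _ := by rw [h3]
  rw [hc, hermFun_trace hM, Complex.re_sum]
  refine Finset.sum_nonpos fun i _ => ?_
  by_cases h : 0 ≤ hM.eigenvalues i
  · simp [hf2, h]
  · simp only [hf2, h, if_neg, id]
    push_neg at h
    simp [le_of_lt h]

lemma trace_pospart_ge (hM : M.IsHermitian) : 0 ≤ ((M * posProj M).trace).re := by
  set f2 : ℝ → ℝ := fun x => if 0 ≤ x then 1 else 0 with hf2
  have hQ : posProj M = hermFun f2 M := rfl
  rw [hQ]
  set P2 := hermFun f2 M with hP2def
  have hPP : P2 * P2 = P2 := by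
    rw [hP2def, hermFun_mul hM]
    exact hermFun_congr hM (fun i => by by_cases h : 0 ≤ hM.eigenvalues i <;> simp [hf2, h])
  have h3 : P2 * M * P2 = hermFun (fun x => f2 x * id x * f2 x) M := by
    conv_lhs => rw [← hermFun_id hM]
    rw [hP2def, hermFun_mul hM, hermFun_mul hM]
  have hc : (M * P2).trace = (hermFun (fun x => f2 x * id x * f2 x) M).trace := by
    calc (M * P2).trace = (M * P2 * P2).trace := by rw [Matrix.mul_assoc, hPP]
      _ = (P2 * (M * P2)).trace := Matrix.trace_mul_comm _ _
      _ = (P2 * M * P2).trace := by rw [Matrix.mul_assoc]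
      _ = _ := by rw [h3]
  rw [hc, hermFun_trace hM, Complex.re_sum]
  refine Finset.sum_nonneg fun i _ => ?_
  by_cases h : 0 ≤ hM.eigenvalues i
  · simp [hf2, h]
  · simp [hf2, h]

end API2
section API3
set_option linter.unusedSectionVars false
open Matrix ComplexOrder
set_option maxHeartbeats 1000000
variable {n : Type*} [Fintype n] [DecidableEq n]

lemma key_CS {τ ρ : Matrix n n ℂ} (hτ : τ.PosSemidef) (hρ : ρ.PosSemidef)
    (hsupp : ∀ x, τ *ᵥ x = 0 → ρ *ᵥ x = 0)
    (P : Matrix n n ℂ) (hP : P.PosSemidef) (h1P : (1 - P).PosSemidef) :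
    (((ρ * P).trace).re)^2 ≤
      ((pinvSqrt τ * ρ * pinvSqrt τ * ρ).trace).re * ((τ * P).trace).re := by
  have hτh := hτ.1
  have hev := hτ.eigenvalues_nonneg
  set S := pinvSqrt τ with hSdef
  set sq := hermFun Real.sqrt τ with hsqdef
  set q := hermFun (fun x => Real.sqrt (Real.sqrt x)) τ with hqdef
  set Pi := hermFun (fun x => if x ≤ 0 then 0 else 1) τ with hPidef
  have hSform : S = hermFun (fun x => if x ≤ 0 then 0 else (Real.sqrt x)⁻¹) τ := rfl
  -- basic products
  have pqq : q * q = sq := by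
    rw [hqdef, hermFun_mul hτh, hsqdef]
    exact hermFun_congr hτh (fun i => Real.mul_self_sqrt (Real.sqrt_nonneg _))
  have psqS : sq * S = Pi := by
    rw [hsqdef, hSform, hermFun_mul hτh, hPidef]
    refine hermFun_congr hτh (fun i => ?_)
    by_cases h : hτh.eigenvalues i ≤ 0
    · have : hτh.eigenvalues i = 0 := le_antisymm h (hev i)
      simp [h, this]
    · push_neg at h
      simp only [not_le.mpr h, if_neg, if_false]
      exact mul_inv_cancel₀ (ne_of_gt (Real.sqrt_pos.mpr h))
  have pSsq : S * sq = Pi := by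
    rw [hsqdef, hSform, hermFun_mul hτh, hPidef]
    refine hermFun_congr hτh (fun i => ?_)
    by_cases h : hτh.eigenvalues i ≤ 0
    · have : hτh.eigenvalues i = 0 := le_antisymm h (hev i)
      simp [h, this]
    · push_neg at h
      simp only [not_le.mpr h, if_neg, if_false]
      exact inv_mul_cancel₀ (ne_of_gt (Real.sqrt_pos.mpr h))
  have qsqq : q * sq * q = τ := by
    rw [hqdef, hsqdef, hermFun_mul hτh, hermFun_mul hτh]
    have : hermFun (fun x => Real.sqrt (Real.sqrt x) * Real.sqrt x * Real.sqrt (Real.sqrt x)) τ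
        = hermFun id τ := by
      refine hermFun_congr hτh (fun i => ?_)
      have h1 : Real.sqrt (Real.sqrt (hτh.eigenvalues i)) *
          Real.sqrt (hτh.eigenvalues i) * Real.sqrt (Real.sqrt (hτh.eigenvalues i)) =
          (Real.sqrt (Real.sqrt (hτh.eigenvalues i)) * Real.sqrt (Real.sqrt (hτh.eigenvalues i)))
            * Real.sqrt (hτh.eigenvalues i) := by ring
      rw [h1, Real.mul_self_sqrt (Real.sqrt_nonneg _),
        Real.mul_self_sqrt (hev i)]
      rfl
    rw [this, hermFun_id hτh]
  -- support facts
  obtain ⟨ρPi, Piρ⟩ := mul_suppProj hτ hρ.1 hsupp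
  rw [← hPidef] at ρPi Piρ
  -- hermitian/psd facts
  have hSh : S.IsHermitian := by rw [hSform]; exact hermFun_isHermitian hτh
  have hqh : q.IsHermitian := by rw [hqdef]; exact hermFun_isHermitian hτh
  have hA' : (S * ρ * S).PosSemidef := by
    have := hρ.mul_mul_conjTranspose_same S
    rwa [hSh.eq] at this
  have hXpsd : (q * (S * ρ * S) * q).PosSemidef := by
    have := hA'.mul_mul_conjTranspose_same q
    rwa [hqh.eq] at this
  have hYpsd : (q * P * q).PosSemidef := by
    have := hP.mul_mul_conjTranspose_same q
    rwa [hqh.eq] at this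
  -- conj2 trace identity
  have conj2 : ∀ A B : Matrix n n ℂ, ((q*A*q)*(q*B*q)).trace = ((sq*A*sq)*B).trace := by
    intro A B
    have e1 : (q*A*q)*(q*B*q) = q*(A*((q*q)*(B*q))) := by simp only [Matrix.mul_assoc]
    rw [e1, pqq, Matrix.trace_mul_comm q (A*(sq*(B*q)))]
    have e2 : (A*(sq*(B*q)))*q = A*(sq*(B*(q*q))) := by simp only [Matrix.mul_assoc]
    rw [e2, pqq, Matrix.trace_mul_comm A (sq*(B*sq))]
    have e3 : (sq*(B*sq))*A = sq*(B*(sq*A)) := by simp only [Matrix.mul_assoc]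
    rw [e3, Matrix.trace_mul_comm sq (B*(sq*A))]
    have e4 : (B*(sq*A))*sq = B*(sq*(A*sq)) := by simp only [Matrix.mul_assoc]
    rw [e4, Matrix.trace_mul_comm B (sq*(A*sq))]
    congr 1
    simp only [Matrix.mul_assoc]
  -- sq * (S*ρ*S) * sq = ρ
  have eA : sq * (S * ρ * S) * sq = ρ := by
    have e1 : sq * (S * ρ * S) * sq = (sq * S) * (ρ * (S * sq)) := by
      simp only [Matrix.mul_assoc]
    rw [e1, psqS, pSsq, ρPi, Piρ]
  have idXY : ((q*(S*ρ*S)*q) * (q*P*q)).trace = (ρ*P).trace := by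
    rw [conj2 (S*ρ*S) P, eA]
  have idXX : ((q*(S*ρ*S)*q) * (q*(S*ρ*S)*q)).trace = (S*ρ*S*ρ).trace := by
    rw [conj2 (S*ρ*S) (S*ρ*S), eA, Matrix.trace_mul_comm ρ (S*ρ*S)]
  have idYsq : ((q*P*q)*sq).trace = (τ*P).trace := by
    have e1 : (q*P*q)*sq = (q*P)*(q*sq) := by simp only [Matrix.mul_assoc]
    rw [e1, Matrix.trace_mul_comm (q*P) (q*sq)]
    have e2 : (q*sq)*(q*P) = ((q*sq)*q)*P := by simp only [Matrix.mul_assoc]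
    rw [e2, qsqq]
  have hsqY : (sq - q*P*q).PosSemidef := by
    have e : q*(1-P)*q = sq - q*P*q := by
      rw [Matrix.mul_sub, Matrix.mul_one, Matrix.sub_mul, pqq]
    have := h1P.mul_mul_conjTranspose_same q
    rwa [hqh.eq, e] at this
  have hYY_le : (((q*P*q)*(q*P*q)).trace).re ≤ ((τ*P).trace).re := by
    have h0 := trace_mul_re_nonneg hYpsd hsqY
    rw [Matrix.mul_sub, Matrix.trace_sub, Complex.sub_re, idYsq] at h0
    linarith
  have hcs := trace_CS hXpsd.1 hYpsd.1
  rw [idXY, idXX] at hcs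
  have hT0 : 0 ≤ ((S*ρ*S*ρ).trace).re := trace_mul_re_nonneg hA' hρ
  calc (((ρ * P).trace).re)^2
      ≤ ((S*ρ*S*ρ).trace).re * (((q*P*q)*(q*P*q)).trace).re := hcs
    _ ≤ ((S*ρ*S*ρ).trace).re * ((τ*P).trace).re :=
        mul_le_mul_of_nonneg_left hYY_le hT0
end API3
section MAIN
set_option linter.unusedSectionVars false
set_option maxHeartbeats 1000000
open Matrix ComplexOrder
variable {n : Type*} [Fintype n] [DecidableEq n]

lemma gamma_bound (ε lam : ℝ) (hε : 0 < ε) (hε1 : ε < 1)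
    (hlam : 0 < lam) (hlam1 : lam < 1)
    (ρ σ : Matrix n n ℂ)
    (hρ : ρ.PosSemidef) (hρ1 : ρ.trace = 1) (hσ : σ.PosSemidef)
    (hsupp : ∀ x : n → ℂ, (lam • ρ + (1 - lam) • σ) *ᵥ x = 0 → ρ *ᵥ x = 0)
    (γ : ℝ) (hγ : ((ρ * posProj (((2 : ℝ) ^ γ) • σ - ρ)).trace).re ≤ ε) :
    (1 - ε) * (lam + (1 - lam) * (2 : ℝ) ^ (-γ))⁻¹ ≤
      ((pinvSqrt (lam • ρ + (1 - lam) • σ) * ρ *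
        pinvSqrt (lam • ρ + (1 - lam) • σ) * ρ).trace).re := by
  have hτpsd : (lam • ρ + (1 - lam) • σ).PosSemidef :=
    (psd_real_smul hρ hlam.le).add (psd_real_smul hσ (by linarith))
  have hM : (((2 : ℝ) ^ γ) • σ - ρ).IsHermitian := (herm_real_smul hσ.1 _).sub hρ.1
  set M : Matrix n n ℂ := ((2 : ℝ) ^ γ) • σ - ρ with hMdef
  set Q : Matrix n n ℂ := posProj M with hQdef
  set Pm : Matrix n n ℂ := 1 - Q with hPdef
  have hQpsd : Q.PosSemidef := posProj_psd hM
  have hPpsd : Pm.PosSemidef := one_sub_posProj_psd hM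
  have h1P : ((1 : Matrix n n ℂ) - Pm).PosSemidef := by
    rw [hPdef, sub_sub_cancel]; exact hQpsd
  have hkey := key_CS hτpsd hρ hsupp Pm hPpsd h1P
  set S := pinvSqrt (lam • ρ + (1 - lam) • σ) with hSdef
  set T := ((S * ρ * S * ρ).trace).re with hTdef
  set t := (((ρ * Pm)).trace).re with htdef
  set s := (((σ * Pm)).trace).re with hsdef
  -- t = 1 - tr(ρQ)
  have htval : t = 1 - ((ρ * Q).trace).re := by
    rw [htdef, hPdef, Matrix.mul_sub, Matrix.mul_one, Matrix.trace_sub, Complex.sub_re, hρ1]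
    simp
  have hQ0 : 0 ≤ ((ρ * Q).trace).re := trace_mul_re_nonneg hρ hQpsd
  have ht1 : 1 - ε ≤ t := by rw [htval]; linarith
  have ht2 : t ≤ 1 := by rw [htval]; linarith
  have ht0 : 0 < t := by linarith
  -- spectral inequality : 2^γ s ≤ t
  have hMP : ((M * Pm).trace).re ≤ 0 := by
    rw [hPdef, hQdef]; exact trace_negpart_le hM
  have hexp : ((M * Pm).trace).re = (2:ℝ)^γ * s - t := by
    rw [hMdef, Matrix.sub_mul, smul_mul_assoc, Matrix.trace_sub, Matrix.trace_smul,
      Complex.sub_re, Complex.smul_re, smul_eq_mul]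
  have hs0 : 0 ≤ s := trace_mul_re_nonneg hσ hPpsd
  have h2γ : (0:ℝ) < (2:ℝ)^γ := Real.rpow_pos_of_pos (by norm_num) γ
  have hsle : s ≤ (2:ℝ)^(-γ) * t := by
    have h1 : s ≤ t / (2:ℝ)^γ := (le_div_iff₀ h2γ).mpr (by nlinarith)
    calc s ≤ t / (2:ℝ)^γ := h1
      _ = (2:ℝ)^(-γ) * t := by
          rw [Real.rpow_neg (by norm_num : (0:ℝ) ≤ 2)]
          ring
  -- trace(τ P) = lam t + (1-lam) s
  have hτP : (((lam • ρ + (1 - lam) • σ) * Pm).trace).re = lam * t + (1 - lam) * s := by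
    rw [Matrix.add_mul, smul_mul_assoc, smul_mul_assoc, Matrix.trace_add, Matrix.trace_smul,
      Matrix.trace_smul, Complex.add_re, Complex.smul_re, Complex.smul_re, smul_eq_mul, smul_eq_mul]
  have hT0 : 0 ≤ T := by
    have hSpsd : S.PosSemidef := by
      rw [hSdef]
      exact hermFun_posSemidef hτpsd.1 (fun i => by
        by_cases h : hτpsd.1.eigenvalues i ≤ 0 <;> simp [h] <;> positivity)
    have hA' : (S * ρ * S).PosSemidef := by
      have := hρ.mul_mul_conjTranspose_same S
      rwa [hSpsd.1.eq] at this
    exact trace_mul_re_nonneg hA' hρ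
  -- assemble
  set d := lam + (1 - lam) * (2:ℝ)^(-γ) with hddef
  have hd0 : 0 < d := by
    have := Real.rpow_pos_of_pos (by norm_num : (0:ℝ) < 2) (-γ)
    rw [hddef]; nlinarith
  have step1 : t^2 ≤ T * (lam * t + (1 - lam) * s) := by rw [← hτP]; exact hkey
  have step2 : lam * t + (1 - lam) * s ≤ d * t := by
    have h1 : (1 - lam) * s ≤ (1 - lam) * ((2:ℝ)^(-γ) * t) :=
      mul_le_mul_of_nonneg_left hsle (by linarith)
    rw [hddef]; nlinarith
  have step3 : t * t ≤ (T * d) * t := by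
    have := le_trans step1 (mul_le_mul_of_nonneg_left step2 hT0)
    nlinarith [sq_nonneg t]
  have step4 : t ≤ T * d := le_of_mul_le_mul_right step3 ht0
  have step5 : 1 - ε ≤ T * d := le_trans ht1 step4
  calc (1 - ε) * d⁻¹ = (1 - ε) / d := (div_eq_mul_inv _ _).symm
    _ ≤ T := by rw [div_le_iff₀ hd0]; linarith

lemma set_nonempty (ε : ℝ) (hε : 0 < ε) (ρ σ : Matrix n n ℂ)
    (hρ : ρ.PosSemidef) (hσ : σ.PosSemidef) :
    ∃ γ : ℝ, ((ρ * posProj (((2 : ℝ) ^ γ) • σ - ρ)).trace).re ≤ ε := by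
  have hc0 : 0 ≤ (σ.trace).re := psd_trace_re_nonneg hσ
  have hbound : ∀ γ : ℝ, ((ρ * posProj (((2 : ℝ) ^ γ) • σ - ρ)).trace).re
      ≤ (2:ℝ)^γ * (σ.trace).re := by
    intro γ
    have hM : (((2 : ℝ) ^ γ) • σ - ρ).IsHermitian := (herm_real_smul hσ.1 _).sub hρ.1
    set M : Matrix n n ℂ := ((2 : ℝ) ^ γ) • σ - ρ with hMdef
    set Q : Matrix n n ℂ := posProj M with hQdef
    have h1 : 0 ≤ ((M * Q).trace).re := trace_pospart_ge hM
    have hexp : ((M * Q).trace).re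
        = (2:ℝ)^γ * ((σ * Q).trace).re - ((ρ * Q).trace).re := by
      rw [hMdef, Matrix.sub_mul, smul_mul_assoc, Matrix.trace_sub, Matrix.trace_smul,
        Complex.sub_re, Complex.smul_re, smul_eq_mul]
    have hσQ : ((σ * Q).trace).re ≤ (σ.trace).re := by
      have h2 : 0 ≤ ((σ * (1 - Q)).trace).re :=
        trace_mul_re_nonneg hσ (one_sub_posProj_psd hM)
      rw [Matrix.mul_sub, Matrix.mul_one, Matrix.trace_sub, Complex.sub_re] at h2
      linarith
    have h3 : (0:ℝ) ≤ (2:ℝ)^γ := (Real.rpow_pos_of_pos (by norm_num) γ).le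
    nlinarith
  rcases eq_or_lt_of_le hc0 with hc | hc
  · refine ⟨0, le_trans (hbound 0) ?_⟩
    rw [← hc]
    simp [hε.le]
  · refine ⟨Real.logb 2 (ε / (σ.trace).re), le_trans (hbound _) ?_⟩
    rw [Real.rpow_logb (by norm_num) (by norm_num) (div_pos hε hc)]
    rw [div_mul_cancel₀ _ (ne_of_gt hc)]

end MAIN


/-- Lower bound on the (exponential of the) collision relative entropy in terms of the
information spectrum relative entropy:
`exp D₂(ρ ‖ λρ + (1−λ)σ) ≥ (1−ε)[λ + (1−λ) 2^{−D_s^ε(ρ‖σ)}]⁻¹`. -/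
theorem stmt17 (n : ℕ) (ε lam : ℝ) (hε : 0 < ε) (hε1 : ε < 1)
    (hlam : 0 < lam) (hlam1 : lam < 1)
    (ρ σ : Matrix (Fin n) (Fin n) ℂ)
    (hρ : ρ.PosSemidef) (hρ1 : ρ.trace = 1) (hσ : σ.PosSemidef)
    (hsupp : ∀ x : Fin n → ℂ, (lam • ρ + (1 - lam) • σ) *ᵥ x = 0 → ρ *ᵥ x = 0) :
    ((pinvSqrt (lam • ρ + (1 - lam) • σ) * ρ *
        pinvSqrt (lam • ρ + (1 - lam) • σ) * ρ).trace).re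
      ≥ (1 - ε) * (lam + (1 - lam) * (2 : ℝ) ^ (-(Ds ε ρ σ)))⁻¹ := by
  set Sset : Set ℝ := {γ : ℝ | ((ρ * posProj (((2 : ℝ) ^ γ) • σ - ρ)).trace).re ≤ ε}
    with hSsetdef
  have hDs : Ds ε ρ σ = sSup Sset := rfl
  set T := ((pinvSqrt (lam • ρ + (1 - lam) • σ) * ρ *
      pinvSqrt (lam • ρ + (1 - lam) • σ) * ρ).trace).re with hTdef
  have hkey : ∀ γ ∈ Sset, (1 - ε) * (lam + (1 - lam) * (2:ℝ)^(-γ))⁻¹ ≤ T :=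
    fun γ hγ => gamma_bound ε lam hε hε1 hlam hlam1 ρ σ hρ hρ1 hσ hsupp γ hγ
  have hneS : Sset.Nonempty := by
    obtain ⟨γ, hγ⟩ := set_nonempty ε hε ρ σ hρ hσ
    exact ⟨γ, hγ⟩
  have hden : ∀ x : ℝ, 0 < lam + (1 - lam) * (2:ℝ)^(-x) := fun x => by
    have := Real.rpow_pos_of_pos (by norm_num : (0:ℝ) < 2) (-x)
    nlinarith
  rw [ge_iff_le]
  by_cases hbdd : BddAbove Sset
  · by_contra hcon
    push_neg at hcon
    set D := Ds ε ρ σ with hDdef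
    have hg : ContinuousAt (fun x : ℝ => (1 - ε) * (lam + (1 - lam) * (2:ℝ)^(-x))⁻¹) D := by
      have h1 : ContinuousAt (fun x : ℝ => (2:ℝ)^(-x)) D :=
        (Real.continuousAt_const_rpow (by norm_num : (2:ℝ) ≠ 0)).comp
          (continuous_neg.continuousAt)
      exact continuousAt_const.mul
        ((continuousAt_const.add (continuousAt_const.mul h1)).inv₀ (ne_of_gt (hden D)))
    have hmem : (fun x : ℝ => (1 - ε) * (lam + (1 - lam) * (2:ℝ)^(-x))⁻¹) ⁻¹' {y | T < y}
        ∈ nhds D := hg ((isOpen_lt' T).mem_nhds hcon)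
    obtain ⟨δ, hδ, hball⟩ := Metric.mem_nhds_iff.mp hmem
    have hlt : D - δ/2 < sSup Sset := by rw [← hDs]; linarith
    obtain ⟨γ, hγS, hγgt⟩ := exists_lt_of_lt_csSup hneS hlt
    have hγle : γ ≤ D := by rw [hDs]; exact le_csSup hbdd hγS
    have hγball : γ ∈ Metric.ball D δ := by
      rw [Metric.mem_ball, Real.dist_eq]
      rw [abs_lt]
      constructor <;> linarith
    have hγin := hball hγball
    simp only [Set.mem_preimage, Set.mem_setOf_eq] at hγin
    have := hkey γ hγS
    linarith
  · have hD0 : Ds ε ρ σ = 0 := by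
      rw [hDs, csSup_of_not_bddAbove hbdd, Real.sSup_empty]
    obtain ⟨γ, hγS, hγpos⟩ := not_bddAbove_iff.mp hbdd 0
    have h1 := hkey γ hγS
    have hmono : (1 - ε) * (lam + (1 - lam) * (2:ℝ)^(-(0:ℝ)))⁻¹
        ≤ (1 - ε) * (lam + (1 - lam) * (2:ℝ)^(-γ))⁻¹ := by
      apply mul_le_mul_of_nonneg_left _ (by linarith : (0:ℝ) ≤ 1 - ε)
      apply inv_anti₀ (hden γ)
      have h2 : (2:ℝ)^(-γ) ≤ (2:ℝ)^(-(0:ℝ)) :=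
        (Real.rpow_le_rpow_left_iff (by norm_num : (1:ℝ) < 2)).mpr (by linarith)
      nlinarith
    rw [hD0]
    exact le_trans hmono h1
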